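/- Let G be a topological group acting by automorphisms on a ring R. Among all ring topologies on R for which the action map G × R → R is continuous, there exists a finest one. -/

import Mathlib

/-- There is a finest ring topology on `R` making a given action of a topological group `G` by
ring automorphisms continuous. -/
theorem exists_finest_ring_topology_continuous_action {G R : Type*} [Group G]
    [TopologicalSpace G] [IsTopologicalGroup G] [Ring R] [MulSemiringAction G R] :
    ∃ t : TopologicalSpace R, @IsTopologicalRing R t _ ∧
      (@Continuous (G × R) R (@instTopologicalSpaceProd G R _ t) t fun p => p.1 • p.2) ∧
      ∀ t' : TopologicalSpace R, @IsTopologicalRing R t' _ →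
        (@Continuous (G × R) R (@instTopologicalSpaceProd G R _ t') t' fun p => p.1 • p.2) →
        t ≤ t' := by
  set S : Set (TopologicalSpace R) :=
    {t' | @IsTopologicalRing R t' _ ∧
      @Continuous (G × R) R (@instTopologicalSpaceProd G R _ t') t' fun p => p.1 • p.2} with hS
  refine ⟨sInf S, ?_, ?_, fun t' h1 h2 => sInf_le ⟨h1, h2⟩⟩
  · letI := sInf S
    exact
      { toContinuousAdd := continuousAdd_sInf fun t ht => (ht.1).toContinuousAdd
        toContinuousMul := continuousMul_sInf fun t ht => (ht.1).toContinuousMul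
        toContinuousNeg := continuousNeg_sInf fun t ht => (ht.1).toContinuousNeg }
  · rw [continuous_sInf_rng]
    intro t ht
    refine continuous_le_dom ?_ ht.2
    exact le_inf (le_trans inf_le_left le_rfl)
      (le_trans inf_le_right (induced_mono (sInf_le ht)))
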